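/- arXiv:1005.0542 — 3 statements merged into one kernel-verified Lean document; each statement's English description precedes it below -/
import Mathlib

section
/- For every natural number α and every m ≥ 0, the function x ↦ e^{−x/2} L_m^α(x) satisfies d/dx ( e^{−x/2} L_m^α(x) ) = − e^{−x/2} ( (1/2) L_m^α(x) + Σ_{k=0}^{m−1} L_k^α(x) ) for all real x. -/
/-- The generalized Laguerre polynomial
`L_n^α(x) = ∑_{k=0}^{n} (−1)^k ⬝ C(n+α, n−k) ⬝ x^k / k!`. -/
noncomputable def lagPoly (α n : ℕ) (x : ℝ) : ℝ :=
  ∑ k ∈ Finset.range (n + 1),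
    (-1 : ℝ) ^ k * ((n + α).choose (n - k) : ℝ) * x ^ k / (Nat.factorial k : ℝ)

lemma sum_lagPoly (α m : ℕ) (x : ℝ) :
    ∑ k ∈ Finset.range m, lagPoly α k x =
    ∑ j ∈ Finset.range m,
      (-1 : ℝ) ^ j * ((m + α).choose (m - 1 - j) : ℝ) * x ^ j / (Nat.factorial j : ℝ) := by
  induction m with
  | zero => simp
  | succ n ih =>
    rw [Finset.sum_range_succ, ih, lagPoly]
    rw [Finset.sum_range_succ (n := n), Finset.sum_range_succ (n := n)]
    have h1 : ∀ j ∈ Finset.range n,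
        (-1 : ℝ) ^ j * ((n + 1 + α).choose (n + 1 - 1 - j) : ℝ) * x ^ j / (Nat.factorial j : ℝ)
        = (-1 : ℝ) ^ j * ((n + α).choose (n - 1 - j) : ℝ) * x ^ j / (Nat.factorial j : ℝ)
          + (-1 : ℝ) ^ j * ((n + α).choose (n - j) : ℝ) * x ^ j / (Nat.factorial j : ℝ) := by
      intro j hj
      rw [Finset.mem_range] at hj
      have hchoose : (n + 1 + α).choose (n + 1 - 1 - j) =
          (n + α).choose (n - 1 - j) + (n + α).choose (n - j) := by
        have h2 : n + 1 - 1 - j = (n - 1 - j) + 1 := by omega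
        have h3 : n + 1 + α = (n + α) + 1 := by omega
        have h4 : n - j = (n - 1 - j) + 1 := by omega
        rw [h2, h3, h4, Nat.choose_succ_succ]
      rw [hchoose]
      push_cast
      ring
    rw [Finset.sum_congr rfl h1, Finset.sum_add_distrib]
    have h5 : n + 1 - 1 - n = 0 := by omega
    have h6 : n - n = 0 := by omega
    rw [h5, h6]
    simp only [Nat.choose_zero_right, Nat.cast_one]
    ring

lemma hasDerivAt_lagPoly (α m : ℕ) (x : ℝ) :
    HasDerivAt (fun y => lagPoly α m y)
      (-(∑ k ∈ Finset.range m, lagPoly α k x)) x := by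
  have h : HasDerivAt (fun y => lagPoly α m y)
      (∑ k ∈ Finset.range (m + 1),
        (-1 : ℝ) ^ k * ((m + α).choose (m - k) : ℝ) * (k * x ^ (k - 1)) /
          (Nat.factorial k : ℝ)) x := by
    unfold lagPoly
    exact HasDerivAt.fun_sum fun k _ =>
      (((hasDerivAt_pow k x).const_mul
        ((-1 : ℝ) ^ k * ((m + α).choose (m - k) : ℝ))).div_const _)
  have heq : (∑ k ∈ Finset.range (m + 1),
      (-1 : ℝ) ^ k * ((m + α).choose (m - k) : ℝ) * (k * x ^ (k - 1)) /
        (Nat.factorial k : ℝ)) = -(∑ k ∈ Finset.range m, lagPoly α k x) := by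
    rw [Finset.sum_range_succ']
    simp only [Nat.cast_zero, zero_mul, mul_zero, zero_div, add_zero, Nat.cast_succ]
    rw [sum_lagPoly, ← Finset.sum_neg_distrib]
    apply Finset.sum_congr rfl
    intro j hj
    have h7 : m - (j + 1) = m - 1 - j := by omega
    rw [h7, Nat.factorial_succ]
    have hj1 : (Nat.factorial j : ℝ) ≠ 0 := by positivity
    have hj2 : ((j : ℝ) + 1) ≠ 0 := by positivity
    push_cast
    field_simp
    ring
  rwa [heq] at h
  
/-- `d/dx ( e^{−x/2} L_m^α(x) ) = − e^{−x/2} ( (1/2) L_m^α(x) + ∑_{k=0}^{m−1} L_k^α(x) )`. -/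
theorem deriv_exp_mul_lagPoly (α m : ℕ) (x : ℝ) :
    deriv (fun y : ℝ => Real.exp (-y / 2) * lagPoly α m y) x =
      - Real.exp (-x / 2) *
        ((1 / 2) * lagPoly α m x + ∑ k ∈ Finset.range m, lagPoly α k x) := by
  have hexp : HasDerivAt (fun y : ℝ => Real.exp (-y / 2)) (Real.exp (-x / 2) * (-1 / 2)) x := by
    have : HasDerivAt (fun y : ℝ => -y / 2) (-1 / 2) x := by
      simpa using ((hasDerivAt_id x).neg.div_const 2)
    exact this.exp
  have h := hexp.mul (hasDerivAt_lagPoly α m x)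
  rw [HasDerivAt.deriv (f := fun y : ℝ => Real.exp (-y / 2) * lagPoly α m y) h]
  ring
end

section
/- For every natural number α and every m ≥ 0, the second derivative of the function x ↦ e^{−x/2} L_m^α(x) satisfies d²/dx² ( e^{−x/2} L_m^α(x) ) = e^{−x/2} ( (1/4) L_m^α(x) + Σ_{k=0}^{m−1} (m−k) · L_k^α(x) ) for all real x. (This identity produces the coefficient h²/4 in front of R_m and the coefficients (m−k) in the right-hand-side sum of the Laguerre-transformed wave equations.) -/
lemma hockey (α j n : ℕ) (h : j ≤ n) :
    ∑ k ∈ Finset.Icc j n, (k + α).choose (k - j) = (n + α + 1).choose (n - j) := by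
  have h1 : ∑ k ∈ Finset.Icc j n, (k + α).choose (k - j)
      = ∑ k ∈ Finset.Icc j n, (k + α).choose (j + α) := by
    refine Finset.sum_congr rfl fun k hk => ?_
    rw [Finset.mem_Icc] at hk
    have h2 : k - j ≤ k + α := by omega
    rw [← Nat.choose_symm h2]
    congr 1
    omega
  rw [h1]
  have h3 : ∑ k ∈ Finset.Icc j n, (k + α).choose (j + α)
      = ∑ i ∈ Finset.Icc (j + α) (n + α), i.choose (j + α) := by
    rw [← Finset.map_add_right_Icc j n α, Finset.sum_map]
    rfl
  rw [h3, Nat.sum_Icc_choose]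
  rw [← Nat.choose_symm (show j + α + 1 ≤ n + α + 1 by omega)]; congr 1; omega

lemma triangle (f : ℕ → ℕ → ℝ) (n : ℕ) :
    ∑ k ∈ Finset.range (n+1), ∑ j ∈ Finset.range (k+1), f k j
      = ∑ j ∈ Finset.range (n+1), ∑ k ∈ Finset.Icc j n, f k j := by
  induction n with
  | zero => simp
  | succ n ih =>
    rw [Finset.sum_range_succ, ih, Finset.sum_range_succ (fun j => ∑ k ∈ Finset.Icc j (n+1), f k j)]
    have : ∀ j ∈ Finset.range (n+1), ∑ k ∈ Finset.Icc j (n+1), f k j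
        = ∑ k ∈ Finset.Icc j n, f k j + f (n+1) j := by
      intro j hj
      rw [Finset.mem_range] at hj
      exact Finset.sum_Icc_succ_top (by omega) _
    rw [Finset.sum_congr rfl this, Finset.sum_add_distrib, Finset.Icc_self, Finset.sum_singleton,
      Finset.sum_range_succ (fun j => f (n+1) j)]
    ring

lemma lagPoly_succ_alpha (α n : ℕ) (x : ℝ) :
    lagPoly (α+1) n x = ∑ k ∈ Finset.range (n+1), lagPoly α k x := by
  unfold lagPoly
  rw [triangle (fun k j => (-1:ℝ)^j * ((k+α).choose (k-j) : ℝ) * x^j / (Nat.factorial j : ℝ)) n]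
  refine Finset.sum_congr rfl fun j hj => ?_
  rw [Finset.mem_range] at hj
  rw [← Finset.sum_div, ← Finset.sum_mul]
  have : ∑ k ∈ Finset.Icc j n, (-1:ℝ)^j * ((k+α).choose (k-j) : ℝ)
      = (-1:ℝ)^j * ((∑ k ∈ Finset.Icc j n, (k+α).choose (k-j) : ℕ) : ℝ) := by
    push_cast; rw [Finset.mul_sum]
  rw [this, hockey α j n (by omega)]
  have : n + (α + 1) = n + α + 1 := by omega
  rw [this]

lemma lagPoly_hasDerivAt (α n : ℕ) (x : ℝ) :
    HasDerivAt (lagPoly α n) (-(∑ k ∈ Finset.range n, lagPoly α k x)) x := by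
  have h1 : HasDerivAt (lagPoly α n)
      (∑ k ∈ Finset.range (n+1),
        (-1:ℝ)^k * ((n+α).choose (n-k) : ℝ) * ((k:ℝ) * x^(k-1)) / (Nat.factorial k : ℝ)) x := by
    apply HasDerivAt.fun_sum
    intro k hk
    exact ((hasDerivAt_pow k x).const_mul ((-1:ℝ)^k * ((n+α).choose (n-k) : ℝ))).div_const _
  convert h1 using 1
  cases n with
  | zero => simp
  | succ m =>
    rw [show (∑ k ∈ Finset.range (m+1), lagPoly α k x) = lagPoly (α+1) m x from
      (lagPoly_succ_alpha α m x).symm]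
    rw [Finset.sum_range_succ']
    simp only [Nat.cast_zero, zero_mul, mul_zero, zero_div, add_zero]
    unfold lagPoly
    rw [neg_eq_iff_eq_neg, ← Finset.sum_neg_distrib]
    refine Finset.sum_congr rfl fun i hi => ?_
    have e1 : m + 1 + α = m + (α + 1) := by omega
    have e2 : m + 1 - (i + 1) = m - i := by omega
    rw [e1, e2, pow_succ, Nat.factorial_succ]
    have h2 : (Nat.factorial i : ℝ) ≠ 0 := Nat.cast_ne_zero.mpr (Nat.factorial_ne_zero i)
    have h3 : ((i:ℝ) + 1) ≠ 0 := by positivity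
    push_cast
    field_simp

lemma count_lemma (f : ℕ → ℝ) (m : ℕ) :
    ∑ k ∈ Finset.range m, f k + ∑ k ∈ Finset.range m, ∑ j ∈ Finset.range k, f j
      = ∑ k ∈ Finset.range m, ((m:ℝ) - (k:ℝ)) * f k := by
  induction m with
  | zero => simp
  | succ m ih =>
    rw [Finset.sum_range_succ f, Finset.sum_range_succ (fun k => ∑ j ∈ Finset.range k, f j),
        Finset.sum_range_succ (fun k => (((m+1 : ℕ) : ℝ) - (k:ℝ)) * f k)]
    have h : ∑ k ∈ Finset.range m, (((m+1 : ℕ) : ℝ) - (k:ℝ)) * f k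
        = ∑ k ∈ Finset.range m, (((m:ℝ) - (k:ℝ)) * f k + f k) := by
      refine Finset.sum_congr rfl fun k hk => ?_
      push_cast; ring
    rw [h, Finset.sum_add_distrib, ← ih]
    push_cast; ring

lemma exp_hasDerivAt (y : ℝ) :
    HasDerivAt (fun y : ℝ => Real.exp (-y / 2)) (Real.exp (-y / 2) * (-(1/2))) y := by
  have h0 : HasDerivAt (fun y : ℝ => -y / 2) (-(1/2)) y := by
    convert (hasDerivAt_id' y).fun_neg.div_const 2 using 1
    all_goals first | rfl | norm_num
  exact (Real.hasDerivAt_exp _).comp y h0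

/-- `d²/dx² ( e^{−x/2} L_m^α(x) )
      = e^{−x/2} ( (1/4) L_m^α(x) + ∑_{k=0}^{m−1} (m−k) ⬝ L_k^α(x) )`. -/
theorem iteratedDeriv_two_exp_mul_lagPoly (α m : ℕ) (x : ℝ) :
    iteratedDeriv 2 (fun y : ℝ => Real.exp (-y / 2) * lagPoly α m y) x =
      Real.exp (-x / 2) *
        ((1 / 4) * lagPoly α m x +
          ∑ k ∈ Finset.range m, ((m : ℝ) - (k : ℝ)) * lagPoly α k x) := by
  have hA : ∀ y : ℝ, HasDerivAt (fun y : ℝ => Real.exp (-y / 2) * lagPoly α m y)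
      (Real.exp (-y / 2) * (-(1/2) * lagPoly α m y - ∑ k ∈ Finset.range m, lagPoly α k y)) y := by
    intro y
    have := (exp_hasDerivAt y).fun_mul (lagPoly_hasDerivAt α m y)
    convert this using 1
    all_goals first | rfl | ring
  have hderiv : deriv (fun y : ℝ => Real.exp (-y / 2) * lagPoly α m y)
      = fun y : ℝ => Real.exp (-y / 2) *
          (-(1/2) * lagPoly α m y - ∑ k ∈ Finset.range m, lagPoly α k y) :=
    funext fun y => (hA y).deriv
  rw [iteratedDeriv_succ, iteratedDeriv_one, hderiv]
  have hInner : HasDerivAt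
      (fun y : ℝ => -(1/2) * lagPoly α m y - ∑ k ∈ Finset.range m, lagPoly α k y)
      (-(1/2) * (-(∑ k ∈ Finset.range m, lagPoly α k x))
        - ∑ k ∈ Finset.range m, -(∑ j ∈ Finset.range k, lagPoly α j x)) x :=
    ((lagPoly_hasDerivAt α m x).const_mul (-(1/2))).sub
      (HasDerivAt.fun_sum fun k _ => lagPoly_hasDerivAt α k x)
  have hB := ((exp_hasDerivAt x).fun_mul hInner).deriv
  rw [hB]
  rw [← count_lemma (fun k => lagPoly α k x) m]
  simp only [Finset.sum_neg_distrib]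
  ring
end

section
/- For every natural number α, every real h > 0, and all natural numbers m, n, the scaled Laguerre functions t ↦ l_m^α(ht) form an orthonormal family in L²(0,∞): ∫_0^∞ l_m^α(ht) · l_n^α(ht) dt = 1 if m = n and 0 otherwise. -/
open MeasureTheory

/-- The orthonormal Laguerre function of degree `m` and order `α`, evaluated at `h⬝t`:
`l_m^α(ht) = √( h ⬝ m! / (m+α)! ) ⬝ (ht)^{α/2} ⬝ e^{−ht/2} ⬝ L_m^α(ht)`. -/
noncomputable def lagFun (α : ℕ) (h : ℝ) (m : ℕ) (t : ℝ) : ℝ :=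
  Real.sqrt (h * (Nat.factorial m : ℝ) / (Nat.factorial (m + α) : ℝ)) *
    (h * t) ^ ((α : ℝ) / 2) * Real.exp (-(h * t) / 2) * lagPoly α m (h * t)

open Finset in
lemma poly_one_sub_X_pow (N : ℕ) :
    (1 - Polynomial.X : Polynomial ℤ) ^ N
      = ∑ m ∈ Finset.range (N + 1),
          Polynomial.C ((-1 : ℤ) ^ m * (N.choose m : ℤ)) * Polynomial.X ^ m := by
  have h : (1 - Polynomial.X : Polynomial ℤ) = -(Polynomial.X - 1) := by ring
  rw [h, neg_pow, sub_pow, Finset.mul_sum]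
  refine Finset.sum_congr rfl fun m hm => ?_
  have h2 : ((-1 : Polynomial ℤ) ^ N) * (-1) ^ (m + N) = (-1) ^ m := by
    rw [pow_add, mul_comm ((-1 : Polynomial ℤ) ^ m), ← mul_assoc, ← mul_pow]
    norm_num
  simp only [one_pow, mul_one, map_mul, map_pow, map_neg, map_one, Polynomial.C_eq_natCast]
  linear_combination (Polynomial.X ^ m * ((N.choose m : ℤ) : Polynomial ℤ)) * h2

lemma coeff_one_sub_X_pow (N i : ℕ) :
    PowerSeries.coeff i ((1 - PowerSeries.X : PowerSeries ℤ) ^ N)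
      = (-1) ^ i * (N.choose i : ℤ) := by
  have hc : ((1 - PowerSeries.X : PowerSeries ℤ)) ^ N
      = (((1 - Polynomial.X : Polynomial ℤ) ^ N : Polynomial ℤ) : PowerSeries ℤ) := by
    simp [Polynomial.coe_pow, Polynomial.coe_sub, Polynomial.coe_one, Polynomial.coe_X]
  rw [hc, Polynomial.coeff_coe, poly_one_sub_X_pow, Polynomial.finset_sum_coeff]
  simp only [Polynomial.coeff_C_mul, Polynomial.coeff_X_pow, mul_ite, mul_one, mul_zero]
  rw [Finset.sum_ite_eq]
  rcases le_or_gt i N with hi | hi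
  · rw [if_pos (Finset.mem_range.mpr (by omega))]
  · rw [if_neg (by simp; omega), Nat.choose_eq_zero_of_lt hi]
    simp

open PowerSeries in
lemma comb (α n j : ℕ) (hj : j ≤ n) :
    ∑ k ∈ Finset.range (n + 1),
        (-1 : ℤ) ^ k * ((n + α).choose (n - k) : ℤ) * ((α + j + k).choose k : ℤ)
      = if j = n then (-1 : ℤ) ^ n else 0 := by
  set U : ℤ⟦X⟧ := (invOneSubPow ℤ (α + j + 1)).val with hUdef
  set V : ℤ⟦X⟧ := (invOneSubPow ℤ 1).val with hVdef
  have hU : U * (1 - X) ^ (α + j + 1) = 1 := by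
    have h := (invOneSubPow ℤ (α + j + 1)).val_inv
    rwa [invOneSubPow_inv_eq_one_sub_pow] at h
  have hV : V * (1 - X : ℤ⟦X⟧) = 1 := by
    have h := (invOneSubPow ℤ 1).val_inv
    rwa [invOneSubPow_inv_eq_one_sub_pow, pow_one] at h
  have hUc : ∀ k : ℕ, coeff k U = ((α + j + k).choose k : ℤ) := by
    intro k
    rw [hUdef, invOneSubPow_val_succ_eq_mk_add_choose, coeff_mk]
    have : (α + j + k).choose (α + j) = (α + j + k).choose k := by
      rw [← Nat.choose_symm (by omega : k ≤ α + j + k)]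
      congr 1
      omega
    rw [← this]
  have hVc : ∀ k : ℕ, coeff k V = 1 := by
    intro k
    rw [hVdef, show (1 : ℕ) = 0 + 1 from rfl, invOneSubPow_val_succ_eq_mk_add_choose, coeff_mk]
    simp
  have h2 : (1 - X : ℤ⟦X⟧) ^ (α + j) * U = V := by
    have hstep : (1 - X : ℤ⟦X⟧) ^ (α + j) * U
        = (1 - X) ^ (α + j) * U * (V * (1 - X)) := by rw [hV, mul_one]
    rw [hstep, show (1 - X : ℤ⟦X⟧) ^ (α + j) * U * (V * (1 - X))
        = (U * (1 - X) ^ (α + j + 1)) * V from by rw [pow_succ]; ring, hU, one_mul]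
  have key : (1 - X : ℤ⟦X⟧) ^ (n + α) * U = (1 - X) ^ (n - j) * V := by
    rw [show n + α = (n - j) + (α + j) from by omega, pow_add, mul_assoc, h2]
  have hcoeff := congrArg (coeff n) key
  rw [coeff_mul, coeff_mul] at hcoeff
  rw [Finset.Nat.sum_antidiagonal_eq_sum_range_succ_mk] at hcoeff
  rw [Finset.Nat.sum_antidiagonal_eq_sum_range_succ_mk] at hcoeff
  simp only [coeff_one_sub_X_pow, hUc, hVc, mul_one] at hcoeff
  -- RHS is alternating sum of choose (n-j)
  have hrhs : ∑ k ∈ Finset.range (n + 1), (-1 : ℤ) ^ k * ((n - j).choose k : ℤ)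
      = if j = n then 1 else 0 := by
    rw [← Finset.sum_subset (Finset.range_subset_range.mpr (by omega : n - j + 1 ≤ n + 1))
      (fun x _ hx => by
        rw [Nat.choose_eq_zero_of_lt (by simp at hx ⊢; omega)]
        simp)]
    rw [Int.alternating_sum_range_choose]
    congr 1
    simp only [eq_iff_iff]
    omega
  rw [hrhs] at hcoeff
  -- now massage LHS
  have hswap : ∑ k ∈ Finset.range (n + 1),
      (-1 : ℤ) ^ k * ((n + α).choose (n - k) : ℤ) * ((α + j + k).choose k : ℤ)
      = (-1 : ℤ) ^ n * ∑ k ∈ Finset.range (n + 1),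
        (-1 : ℤ) ^ k * ((n + α).choose k : ℤ) * ((α + j + (n - k)).choose (n - k) : ℤ) := by
    rw [← Finset.sum_range_reflect, Finset.mul_sum]
    refine Finset.sum_congr rfl fun k hk => ?_
    rw [Finset.mem_range] at hk
    have h0 : n + 1 - 1 - k = n - k := by omega
    rw [h0]
    have h1 : n - (n - k) = k := by omega
    rw [h1]
    have h3 : (-1 : ℤ) ^ (n - k) = (-1) ^ n * (-1) ^ k := by
      rw [← pow_add, show n + k = (n - k) + 2 * k from by omega, pow_add, pow_mul]
      norm_num
    rw [h3]; ring
  rw [hswap, hcoeff]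
  by_cases h : j = n <;> simp [h]

lemma integrableOn_pow_exp (p : ℕ) :
    IntegrableOn (fun x : ℝ => x ^ p * Real.exp (-x)) (Set.Ioi 0) := by
  have h := Real.GammaIntegral_convergent (show (0:ℝ) < p + 1 by positivity)
  have heq : (fun x : ℝ => Real.exp (-x) * x ^ ((p : ℝ) + 1 - 1))
      = fun x : ℝ => x ^ p * Real.exp (-x) := by
    funext x
    rw [add_sub_cancel_right, Real.rpow_natCast, mul_comm]
  rwa [heq] at h

lemma integral_pow_exp (p : ℕ) :
    ∫ x in Set.Ioi (0:ℝ), x ^ p * Real.exp (-x) = (p.factorial : ℝ) := by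
  have h := Real.Gamma_eq_integral (show (0:ℝ) < p + 1 by positivity)
  rw [show ((p : ℝ) + 1) = ((p : ℕ) : ℝ) + 1 from by norm_num,
    Real.Gamma_nat_eq_factorial] at h
  rw [h]
  refine setIntegral_congr_fun measurableSet_Ioi fun x _ => ?_
  rw [add_sub_cancel_right, Real.rpow_natCast, mul_comm]

lemma combR (α n j : ℕ) (hj : j ≤ n) :
    ∑ k ∈ Finset.range (n + 1),
        (-1 : ℝ) ^ k * ((n + α).choose (n - k) : ℝ) * ((α + j + k).choose k : ℝ)
      = if j = n then (-1 : ℝ) ^ n else 0 := by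
  have h := congrArg (fun z : ℤ => (z : ℝ)) (comb α n j hj)
  simp only [Int.cast_sum, Int.cast_mul, Int.cast_pow, Int.cast_neg, Int.cast_one,
    Int.cast_natCast, apply_ite (fun z : ℤ => (z : ℝ)), Int.cast_zero] at h
  exact h

lemma core_le (α m n : ℕ) (hmn : m ≤ n) :
    ∫ x in Set.Ioi (0:ℝ), (x ^ α * Real.exp (-x)) * (lagPoly α m x * lagPoly α n x)
      = if m = n then ((m + α).factorial : ℝ) / (m.factorial : ℝ) else 0 := by
  have expand : ∀ x : ℝ, (x ^ α * Real.exp (-x)) * (lagPoly α m x * lagPoly α n x)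
      = ∑ j ∈ Finset.range (m + 1), ∑ k ∈ Finset.range (n + 1),
          ((-1 : ℝ) ^ j * ((m + α).choose (m - j) : ℝ) / (j.factorial : ℝ)
            * ((-1 : ℝ) ^ k * ((n + α).choose (n - k) : ℝ) / (k.factorial : ℝ)))
          * (x ^ (α + j + k) * Real.exp (-x)) := by
    intro x
    simp only [lagPoly]
    rw [Finset.sum_mul_sum, Finset.mul_sum]
    refine Finset.sum_congr rfl fun j hj => ?_
    rw [Finset.mul_sum]
    refine Finset.sum_congr rfl fun k hk => ?_
    rw [pow_add, pow_add]
    ring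
  calc ∫ x in Set.Ioi (0:ℝ), (x ^ α * Real.exp (-x)) * (lagPoly α m x * lagPoly α n x)
      = ∫ x in Set.Ioi (0:ℝ), ∑ j ∈ Finset.range (m + 1), ∑ k ∈ Finset.range (n + 1),
          ((-1 : ℝ) ^ j * ((m + α).choose (m - j) : ℝ) / (j.factorial : ℝ)
            * ((-1 : ℝ) ^ k * ((n + α).choose (n - k) : ℝ) / (k.factorial : ℝ)))
          * (x ^ (α + j + k) * Real.exp (-x)) := by
        exact integral_congr_ae (Filter.Eventually.of_forall fun x => expand x)
    _ = ∑ j ∈ Finset.range (m + 1), ∑ k ∈ Finset.range (n + 1),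
          ((-1 : ℝ) ^ j * ((m + α).choose (m - j) : ℝ) / (j.factorial : ℝ)
            * ((-1 : ℝ) ^ k * ((n + α).choose (n - k) : ℝ) / (k.factorial : ℝ)))
          * ((α + j + k).factorial : ℝ) := by
        rw [integral_finset_sum _ (fun j _ => integrable_finset_sum _
          (fun k _ => (integrableOn_pow_exp (α + j + k)).const_mul _))]
        refine Finset.sum_congr rfl fun j _ => ?_
        rw [integral_finset_sum _ (fun k _ => (integrableOn_pow_exp (α + j + k)).const_mul _)]
        refine Finset.sum_congr rfl fun k _ => ?_
        rw [MeasureTheory.integral_const_mul, integral_pow_exp]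
    _ = ∑ j ∈ Finset.range (m + 1),
          ((-1 : ℝ) ^ j * ((m + α).choose (m - j) : ℝ) / (j.factorial : ℝ))
            * (((α + j).factorial : ℝ) * (if j = n then (-1 : ℝ) ^ n else 0)) := by
        refine Finset.sum_congr rfl fun j hj => ?_
        rw [Finset.mem_range] at hj
        have hjn : j ≤ n := by omega
        rw [← combR α n j hjn, Finset.mul_sum, Finset.mul_sum]
        refine Finset.sum_congr rfl fun k _ => ?_
        have hfac : ((α + j + k).factorial : ℝ)
            = ((α + j + k).choose k : ℝ) * (k.factorial : ℝ) * ((α + j).factorial : ℝ) := by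
          rw [← Nat.cast_mul, ← Nat.cast_mul]
          congr 1
          have := Nat.choose_mul_factorial_mul_factorial (show k ≤ α + j + k by omega)
          rw [show α + j + k - k = α + j from by omega] at this
          omega
        rw [hfac]
        have hk0 : (k.factorial : ℝ) ≠ 0 := by positivity
        have hj0 : (j.factorial : ℝ) ≠ 0 := by positivity
        field_simp
    _ = if m = n then ((m + α).factorial : ℝ) / (m.factorial : ℝ) else 0 := by
        rcases eq_or_lt_of_le hmn with rfl | hlt
        · rw [if_pos rfl]
          rw [Finset.sum_eq_single m]
          · rw [if_pos rfl, Nat.sub_self, Nat.choose_zero_right, Nat.cast_one,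
              show α + m = m + α from by omega]
            have h1 : ((-1:ℝ) ^ m) * ((-1) ^ m) = 1 := by
              rw [← mul_pow]; norm_num
            have hm0 : (m.factorial : ℝ) ≠ 0 := by positivity
            field_simp
            linear_combination h1
          · intro j hj hjm
            rw [if_neg (by omega : ¬ j = m)]
            ring
          · intro h
            exact absurd (Finset.self_mem_range_succ m) h
        · rw [if_neg (by omega : ¬ m = n)]
          refine Finset.sum_eq_zero fun j hj => ?_
          rw [Finset.mem_range] at hj
          rw [if_neg (by omega : ¬ j = n)]
          ring

lemma core (α m n : ℕ) :
    ∫ x in Set.Ioi (0:ℝ), (x ^ α * Real.exp (-x)) * (lagPoly α m x * lagPoly α n x)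
      = if m = n then ((m + α).factorial : ℝ) / (m.factorial : ℝ) else 0 := by
  rcases le_total m n with hmn | hnm
  · exact core_le α m n hmn
  · have h := core_le α n m hnm
    have hsw : ∫ x in Set.Ioi (0:ℝ), (x ^ α * Real.exp (-x)) * (lagPoly α m x * lagPoly α n x)
        = ∫ x in Set.Ioi (0:ℝ), (x ^ α * Real.exp (-x)) * (lagPoly α n x * lagPoly α m x) := by
      refine integral_congr_ae (Filter.Eventually.of_forall fun x => ?_)
      ring
    rw [hsw, h]
    by_cases hmn : m = n
    · subst hmn; simp
    · rw [if_neg (fun hh => hmn hh.symm), if_neg hmn]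

/-- Orthonormality of the scaled Laguerre functions in `L²(0,∞)`:
`∫_0^∞ l_m^α(ht) ⬝ l_n^α(ht) dt = 1` if `m = n` and `0` otherwise. -/
theorem lagFun_orthonormal (α : ℕ) (h : ℝ) (hh : 0 < h) (m n : ℕ) :
    ∫ t in Set.Ioi (0 : ℝ), lagFun α h m t * lagFun α h n t =
      if m = n then 1 else 0 := by
  set sm := Real.sqrt (h * (Nat.factorial m : ℝ) / (Nat.factorial (m + α) : ℝ)) with hsm
  set sn := Real.sqrt (h * (Nat.factorial n : ℝ) / (Nat.factorial (n + α) : ℝ)) with hsn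
  set F : ℝ → ℝ := fun x =>
    (sm * x ^ ((α : ℝ) / 2) * Real.exp (-x / 2) * lagPoly α m x) *
    (sn * x ^ ((α : ℝ) / 2) * Real.exp (-x / 2) * lagPoly α n x) with hF
  have hkey : ∀ t : ℝ, lagFun α h m t * lagFun α h n t = F (h * t) := by
    intro t; simp only [lagFun, hF, hsm, hsn]
  calc ∫ t in Set.Ioi (0 : ℝ), lagFun α h m t * lagFun α h n t
      = ∫ t in Set.Ioi (0 : ℝ), F (h * t) :=
        integral_congr_ae (Filter.Eventually.of_forall fun t => hkey t)
    _ = h⁻¹ • ∫ x in Set.Ioi (h * 0), F x := integral_comp_mul_left_Ioi F 0 hh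
    _ = h⁻¹ * ∫ x in Set.Ioi (0:ℝ), F x := by rw [mul_zero, smul_eq_mul]
    _ = h⁻¹ * ∫ x in Set.Ioi (0:ℝ),
          (sm * sn) * ((x ^ α * Real.exp (-x)) * (lagPoly α m x * lagPoly α n x)) := by
        congr 1
        refine setIntegral_congr_fun measurableSet_Ioi fun x hx => ?_
        have hx0 : (0:ℝ) < x := hx
        have h1 : x ^ ((α : ℝ) / 2) * x ^ ((α : ℝ) / 2) = x ^ (α : ℕ) := by
          rw [← Real.rpow_add hx0, ← Real.rpow_natCast x α]
          congr 1
          ring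
        have h2 : Real.exp (-x / 2) * Real.exp (-x / 2) = Real.exp (-x) := by
          rw [← Real.exp_add]
          congr 1
          ring
        simp only [hF]
        rw [← h1, ← h2]
        ring
    _ = h⁻¹ * ((sm * sn) *
          ∫ x in Set.Ioi (0:ℝ), (x ^ α * Real.exp (-x)) * (lagPoly α m x * lagPoly α n x)) := by
        rw [MeasureTheory.integral_const_mul]
    _ = if m = n then 1 else 0 := by
        rw [core α m n]
        by_cases hmn : m = n
        · subst hmn
          rw [if_pos rfl, if_pos rfl]
          have hfac : (0:ℝ) < ((m + α).factorial : ℝ) := by positivity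
          have hfm : (0:ℝ) < (m.factorial : ℝ) := by positivity
          have hsq : sm * sm = h * (m.factorial : ℝ) / ((m + α).factorial : ℝ) := by
            rw [hsm]
            exact Real.mul_self_sqrt (by positivity)
          rw [hsq]
          field_simp
        · rw [if_neg hmn, if_neg hmn, mul_zero, mul_zero]
end
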